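/- Let H be a Hilbert space, P a positive invertible bounded operator on H^{⊗(n+1)}, P' a positive invertible bounded operator on H^{⊗n}, and suppose P ≤ C (1 ⊗ P') for some constant C > 0. Define a new inner product ⟨f,g⟩_Q = ⟨f, P g⟩ on H^{⊗(n+1)} and ⟨f,g⟩_Q = ⟨f, P' g⟩ on H^{⊗n}. Then for any h ∈ H and f ∈ H^{⊗n}, the creation operator a⁺(h) f = h ⊗ f satisfies ‖a⁺(h) f‖_Q² ≤ C ‖h‖² ‖f‖_Q². -/

import Mathlib

open scoped RealInnerProductSpace

theorem creation_operator_Q_norm_bound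
    {H K E : Type*} [NormedAddCommGroup H] [InnerProductSpace ℝ H] [CompleteSpace H]
    [NormedAddCommGroup K] [InnerProductSpace ℝ K] [CompleteSpace K]
    [NormedAddCommGroup E] [InnerProductSpace ℝ E] [CompleteSpace E]
    (t : H →ₗ[ℝ] K →ₗ[ℝ] E)
    (ht : ∀ (h h' : H) (f f' : K), ⟪t h f, t h' f'⟫ = ⟪h, h'⟫ * ⟪f, f'⟫)
    (P : E →L[ℝ] E) (P' : K →L[ℝ] K) (C : ℝ) (hC : 0 < C)
    (hP : P.IsPositive) (hP' : P'.IsPositive)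
    (hPu : IsUnit P) (hP'u : IsUnit P')
    (oneP' : E →L[ℝ] E) (honeP' : ∀ (h : H) (f : K), oneP' (t h f) = t h (P' f))
    (hle : (C • oneP' - P).IsPositive)
    (h : H) (f : K) :
    ⟪t h f, P (t h f)⟫ ≤ C * ‖h‖ ^ 2 * ⟪f, P' f⟫ := by
  have h1 := hle.inner_nonneg_left (t h f)
  rw [real_inner_comm] at h1
  simp only [ContinuousLinearMap.sub_apply, ContinuousLinearMap.smul_apply,
    inner_sub_right, real_inner_smul_right, sub_nonneg] at h1
  have h2 : ⟪t h f, oneP' (t h f)⟫ = ‖h‖ ^ 2 * ⟪f, P' f⟫ := by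
    rw [honeP', ht, real_inner_self_eq_norm_sq]
  calc ⟪t h f, P (t h f)⟫ ≤ C * ⟪t h f, oneP' (t h f)⟫ := h1
    _ = C * ‖h‖ ^ 2 * ⟪f, P' f⟫ := by rw [h2]; ring
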